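/- The Pascal adic is conjugate to its inverse via the symbol-exchange map: let S : X → X flip every coordinate, (Sx)_i = 1 − x_i. Then for every x ∈ X of the form x = 0ⁿ1ᵐ10x' (n, m ≥ 0, x' ∈ X), one has T(S(T(x))) = S(x). -/
import Mathlib


/-- Concatenation of a finite word `w` with an infinite tail `x`. -/
def cat (w : List Bool) (x : ℕ → Bool) : ℕ → Bool :=
  fun i => if h : i < w.length then w.get ⟨i, h⟩ else x (i - w.length)

/-- `T` satisfies the Pascal adic law: `T(0ⁿ1ᵐ10x') = 1ᵐ0ⁿ01x'`
(here `0 = false`, `1 = true`). -/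
def PascalLaw (T : (ℕ → Bool) → (ℕ → Bool)) : Prop :=
  ∀ (n m : ℕ) (x' : ℕ → Bool),
    T (cat (List.replicate n false ++ List.replicate m true ++ [true, false]) x')
      = cat (List.replicate m true ++ List.replicate n false ++ [false, true]) x'

/-- The symbol-exchange map `S`, flipping every coordinate. -/
def S : (ℕ → Bool) → (ℕ → Bool) := fun x i => !(x i)


lemma S_cat (w : List Bool) (x : ℕ → Bool) :
    S (cat w x) = cat (w.map (fun b => !b)) (S x) := by
  funext i
  simp only [S, cat, List.length_map]
  split
  · next h => simp [List.getElem_map]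
  · rfl

/-- The Pascal adic is conjugate to its inverse via `S`: for every point
of the form `x = 0ⁿ1ᵐ10x'` one has `T(S(T(x))) = S(x)`. -/
theorem conjugate_to_inverse (T : (ℕ → Bool) → (ℕ → Bool)) (hT : PascalLaw T)
    (n m : ℕ) (x' : ℕ → Bool)
    (x : ℕ → Bool)
    (hx : x = cat (List.replicate n false ++ List.replicate m true ++ [true, false]) x') :
    T (S (T x)) = S x := by
  subst hx
  rw [hT]
  rw [S_cat, S_cat]
  have h1 : (List.replicate m true ++ List.replicate n false ++ [false, true]).map (fun b => !b)
      = List.replicate m false ++ List.replicate n true ++ [true, false] := by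
    simp [List.map_replicate]
  have h2 : (List.replicate n false ++ List.replicate m true ++ [true, false]).map (fun b => !b)
      = List.replicate n true ++ List.replicate m false ++ [false, true] := by
    simp [List.map_replicate]
  rw [h1, h2, hT]
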